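/- In any Nash Equilibrium of the simplified game in which the defender's budget constraint is slack (∑ m_i < B), every node i with m_i > 0 satisfies p_i = C_i^D/(r_i·w_i), equivalently μ_i(p) = 0. -/

import Mathlib

/-- Defender feasibility: `∑ m_i ≤ B` and `0 ≤ m_i ≤ 1 / w_i`. -/
def DefFeasible {N : ℕ} (w : Fin N → ℝ) (B : ℝ) (m : Fin N → ℝ) : Prop :=
  (∑ i, m i ≤ B) ∧ ∀ i, 0 ≤ m i ∧ m i ≤ 1 / w i

/-- Attacker feasibility: `∑ m_i w_i p_i ≤ M` and `p_i ∈ [0,1]`. -/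
def AtkFeasible {N : ℕ} (w : Fin N → ℝ) (M : ℝ) (m p : Fin N → ℝ) : Prop :=
  (∑ i, m i * w i * p i ≤ M) ∧ ∀ i, 0 ≤ p i ∧ p i ≤ 1

/-- Defender payoff. -/
def Ud {N : ℕ} (r w CD : Fin N → ℝ) (m p : Fin N → ℝ) : ℝ :=
  ∑ i, (m i * (p i * r i * w i - CD i) - p i * r i)

/-- Attacker payoff. -/
def Ua {N : ℕ} (r w CA : Fin N → ℝ) (m p : Fin N → ℝ) : ℝ :=
  ∑ i, p i * (r i - m i * (r i * w i + CA i))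

/-- Nash Equilibrium of the simplified game. -/
def IsNE {N : ℕ} (r w CA CD : Fin N → ℝ) (B M : ℝ) (m p : Fin N → ℝ) : Prop :=
  DefFeasible w B m ∧ AtkFeasible w M m p ∧
    (∀ m', DefFeasible w B m' → Ud r w CD m' p ≤ Ud r w CD m p) ∧
    (∀ p', AtkFeasible w M m p' → Ua r w CA m p' ≤ Ua r w CA m p)

/-- In any Nash Equilibrium with slack defender budget (`∑ m_i < B`), every node with
`m_i > 0` satisfies `p_i = C_i^D / (r_i w_i)`, i.e. `μ_i(p) = 0`. -/
lemma sum_sub_of_eq_off {N : ℕ} (i : Fin N) (F G : Fin N → ℝ)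
    (h : ∀ j, j ≠ i → F j = G j) :
    ∑ j, F j - ∑ j, G j = F i - G i := by
  rw [← Finset.add_sum_erase _ F (Finset.mem_univ i),
      ← Finset.add_sum_erase _ G (Finset.mem_univ i)]
  have he : ∑ j ∈ Finset.univ.erase i, F j = ∑ j ∈ Finset.univ.erase i, G j :=
    Finset.sum_congr rfl fun j hj => h j (Finset.ne_of_mem_erase hj)
  linarith [he]

lemma Ud_update_sub {N : ℕ} (r w CD : Fin N → ℝ) (m p : Fin N → ℝ) (i : Fin N) (x : ℝ) :
    Ud r w CD (Function.update m i x) p - Ud r w CD m p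
      = (x - m i) * (p i * r i * w i - CD i) := by
  unfold Ud
  rw [sum_sub_of_eq_off i]
  · simp [Function.update_self]; ring
  · intro j hj; simp [Function.update_of_ne hj]

lemma Ua_update_sub {N : ℕ} (r w CA : Fin N → ℝ) (m p : Fin N → ℝ) (i : Fin N) (y : ℝ) :
    Ua r w CA m (Function.update p i y) - Ua r w CA m p
      = (y - p i) * (r i - m i * (r i * w i + CA i)) := by
  unfold Ua
  rw [sum_sub_of_eq_off i]
  · simp [Function.update_self]; ring
  · intro j hj; simp [Function.update_of_ne hj]

lemma sum_update_eq {N : ℕ} (m : Fin N → ℝ) (i : Fin N) (x : ℝ) :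
    ∑ j, Function.update m i x j = ∑ j, m j - m i + x := by
  rw [Finset.sum_update_of_mem (Finset.mem_univ i),
      ← Finset.add_sum_erase _ m (Finset.mem_univ i), Finset.sdiff_singleton_eq_erase]
  ring

theorem ne_slack_budget_mu_zero {N : ℕ} (r w CA CD : Fin N → ℝ) (B M : ℝ)
    (hr : ∀ i, 0 < r i) (hw : ∀ i, 0 < w i) (hCA : ∀ i, 0 < CA i) (hCD : ∀ i, 0 < CD i)
    (hCDr : ∀ i, CD i ≤ r i * w i) (hB : 0 < B) (hM : 0 < M)
    (m p : Fin N → ℝ) (hNE : IsNE r w CA CD B M m p)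
    (hslack : ∑ i, m i < B) :
    ∀ i, 0 < m i → p i = CD i / (r i * w i) ∧ p i * r i * w i - CD i = 0 := by
  obtain ⟨⟨hmB, hmbox⟩, ⟨hpM, hpbox⟩, hDopt, hAopt⟩ := hNE
  intro i hmi
  have hrw : 0 < r i * w i := mul_pos (hr i) (hw i)
  have key : p i * r i * w i - CD i = 0 := by
    rcases lt_trichotomy (p i * r i * w i - CD i) 0 with hneg | h0 | hpos
    · exfalso
      have hfeas : DefFeasible w B (Function.update m i 0) := by
        refine ⟨?_, ?_⟩
        · rw [sum_update_eq]; linarith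
        · intro j
          rcases eq_or_ne j i with rfl | hj
          · simp only [Function.update_self]
            exact ⟨le_refl 0, le_of_lt (div_pos one_pos (hw j))⟩
          · simp only [Function.update_of_ne hj]; exact hmbox j
      have hle := hDopt _ hfeas
      have hd := Ud_update_sub r w CD m p i 0
      nlinarith [mul_pos hmi (neg_pos.mpr hneg)]
    · exact h0
    · exfalso
      have hlt : m i < 1 / w i := by
        rcases lt_or_eq_of_le (hmbox i).2 with h | h
        · exact h
        · exfalso
          have hfeasp : AtkFeasible w M m (Function.update p i 0) := by
            refine ⟨?_, ?_⟩
            · have hs : ∑ j, m j * w j * Function.update p i 0 j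
                  = ∑ j, m j * w j * p j - m i * w i * p i := by
                have := sum_sub_of_eq_off i (fun j => m j * w j * Function.update p i 0 j)
                    (fun j => m j * w j * p j) (by intro j hj; simp [Function.update_of_ne hj])
                simp at this; linarith
              rw [hs]
              have : 0 ≤ m i * w i * p i :=
                mul_nonneg (mul_nonneg hmi.le (hw i).le) (hpbox i).1
              linarith
            · intro j
              rcases eq_or_ne j i with rfl | hj
              · simp
              · simp [Function.update_of_ne hj]; exact hpbox j
          have hle := hAopt _ hfeasp
          have ha := Ua_update_sub r w CA m p i 0
          have hcoef : r i - m i * (r i * w i + CA i) = -(CA i / w i) := by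
            have hw0 : w i ≠ 0 := (hw i).ne'
            rw [h]
            field_simp
            ring
          rw [hcoef] at ha
          have hpi0 : p i = 0 := by
            have h1 : 0 ≤ p i := (hpbox i).1
            have h2 : 0 < CA i / w i := div_pos (hCA i) (hw i)
            nlinarith
          rw [hpi0] at hpos
          have := hCD i
          linarith [hpos]
      set ε := min (B - ∑ j, m j) (1 / w i - m i) with hε
      have hεpos : 0 < ε := lt_min (by linarith) (by linarith)
      have hfeas : DefFeasible w B (Function.update m i (m i + ε)) := by
        refine ⟨?_, ?_⟩
        · rw [sum_update_eq]
          have := min_le_left (B - ∑ j, m j) (1 / w i - m i)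
          linarith
        · intro j
          rcases eq_or_ne j i with rfl | hj
          · constructor
            · simp only [Function.update_self]; linarith
            · simp only [Function.update_self]
              have := min_le_right (B - ∑ k, m k) (1 / w j - m j)
              linarith
          · simp only [Function.update_of_ne hj]; exact hmbox j
      have hle := hDopt _ hfeas
      have hd := Ud_update_sub r w CD m p i (m i + ε)
      nlinarith [mul_pos hεpos hpos]
  refine ⟨?_, key⟩
  have : p i * (r i * w i) = CD i := by linarith [key]; 
  field_simp
  rw [eq_div_iff hrw.ne']
  linarith [this]
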